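/- If every edge of M' \ M* is incident to exactly two edges of M*, then |M*| ≥ |M'|. Here M' and M* are matchings in a graph G. -/

import Mathlib

/-- `M` is a matching of the simple graph `G`: a set of edges of `G` that are
pairwise vertex-disjoint. -/
def IsMatching {V : Type*} (G : SimpleGraph V) (M : Finset (Sym2 V)) : Prop :=
  (∀ e ∈ M, e ∈ G.edgeSet) ∧
  ∀ e ∈ M, ∀ f ∈ M, e ≠ f → ∀ v : V, v ∈ e → v ∉ f

/-- If every edge of `M' \ M*` is "bad", i.e. incident to two distinct edges of `M*`
(one at each endpoint), then `|M*| ≥ |M'|`. -/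
theorem stmt0 {V : Type*} [Fintype V] [DecidableEq V] (G : SimpleGraph V)
    (Mstar M' : Finset (Sym2 V))
    (hMstar : IsMatching G Mstar) (hM' : IsMatching G M')
    (bad : ∀ e ∈ M' \ Mstar, ∃ f ∈ Mstar, ∃ g ∈ Mstar, f ≠ g ∧
      (∃ v : V, v ∈ e ∧ v ∈ f) ∧ (∃ v : V, v ∈ e ∧ v ∈ g)) :
    M'.card ≤ Mstar.card := by
  classical
  set A : Finset (Sym2 V × V) := ((M' \ Mstar) ×ˢ (Finset.univ : Finset V)).filter
      (fun p => p.2 ∈ p.1 ∧ ∃ f ∈ Mstar, p.2 ∈ f) with hAdef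
  set B : Finset (Sym2 V × V) := ((Mstar \ M') ×ˢ (Finset.univ : Finset V)).filter
      (fun p => p.2 ∈ p.1) with hBdef
  -- the map sending (e,v) to (f,v) where f is the M* edge containing v
  have hAB : A.card ≤ B.card := by
    apply Finset.card_le_card_of_injOn
      (fun p => if h : ∃ f ∈ Mstar, p.2 ∈ f then (h.choose, p.2) else p)
    · intro p hp
      rw [hAdef, Finset.mem_coe, Finset.mem_filter] at hp
      obtain ⟨hmem, hv, hex⟩ := hp
      rw [Finset.mem_product, Finset.mem_sdiff] at hmem
      simp only [dif_pos hex]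
      obtain ⟨hf, hvf⟩ := hex.choose_spec
      rw [hBdef, Finset.mem_coe, Finset.mem_filter, Finset.mem_product, Finset.mem_sdiff]
      refine ⟨⟨⟨hf, ?_⟩, Finset.mem_univ _⟩, hvf⟩
      intro hfM'
      have hne : p.1 ≠ hex.choose := by
        intro h; exact hmem.1.2 (h ▸ hf)
      exact hM'.2 p.1 hmem.1.1 hex.choose hfM' hne p.2 hv hvf
    · intro p hp q hq heq
      rw [Finset.mem_coe, hAdef, Finset.mem_filter] at hp hq
      obtain ⟨hpmem, hpv, hpex⟩ := hp
      obtain ⟨hqmem, hqv, hqex⟩ := hq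
      simp only [dif_pos hpex, dif_pos hqex, Prod.mk.injEq] at heq
      rw [Finset.mem_product, Finset.mem_sdiff] at hpmem hqmem
      have hvv : p.2 = q.2 := heq.2
      have h1 : p.1 = q.1 := by
        by_contra hne
        exact hM'.2 p.1 hpmem.1.1 q.1 hqmem.1.1 hne p.2 hpv (hvv ▸ hqv)
      exact Prod.ext h1 hvv
  -- lower bound: 2 * |M' \ M*| ≤ |A|
  have hAcard : 2 * (M' \ Mstar).card ≤ A.card := by
    have hfib : A.card = ∑ e ∈ M' \ Mstar, (A.filter (fun p => p.1 = e)).card := by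
      apply Finset.card_eq_sum_card_fiberwise
      intro p hp
      rw [hAdef, Finset.mem_coe, Finset.mem_filter, Finset.mem_product] at hp
      exact hp.1.1
    rw [hfib]
    have : ∀ e ∈ M' \ Mstar, 2 ≤ (A.filter (fun p => p.1 = e)).card := by
      intro e he
      obtain ⟨f, hf, g, hg, hfg, ⟨v, hve, hvf⟩, ⟨w, hwe, hwg⟩⟩ := bad e he
      have hvw : v ≠ w := by
        intro h
        exact hMstar.2 f hf g hg hfg v hvf (h ▸ hwg)
      have hsub : ({(e, v), (e, w)} : Finset (Sym2 V × V)) ⊆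
          A.filter (fun p => p.1 = e) := by
        intro p hp
        rw [Finset.mem_insert, Finset.mem_singleton] at hp
        rw [Finset.mem_filter, hAdef, Finset.mem_filter, Finset.mem_product]
        rcases hp with rfl | rfl
        · exact ⟨⟨⟨he, Finset.mem_univ _⟩, hve, f, hf, hvf⟩, rfl⟩
        · exact ⟨⟨⟨he, Finset.mem_univ _⟩, hwe, g, hg, hwg⟩, rfl⟩
      calc 2 = ({(e, v), (e, w)} : Finset (Sym2 V × V)).card := by
                rw [Finset.card_insert_of_notMem (by simp [hvw]), Finset.card_singleton]
           _ ≤ _ := Finset.card_le_card hsub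
    calc 2 * (M' \ Mstar).card = ∑ _e ∈ M' \ Mstar, 2 := by
          rw [Finset.sum_const, smul_eq_mul, mul_comm]
      _ ≤ _ := Finset.sum_le_sum this
  -- upper bound: |B| ≤ 2 * |M* \ M'|
  have hBcard : B.card ≤ 2 * (Mstar \ M').card := by
    have hfib : B.card = ∑ f ∈ Mstar \ M', (B.filter (fun p => p.1 = f)).card := by
      apply Finset.card_eq_sum_card_fiberwise
      intro p hp
      rw [hBdef, Finset.mem_coe, Finset.mem_filter, Finset.mem_product] at hp
      exact hp.1.1
    rw [hfib]
    have : ∀ f ∈ Mstar \ M', (B.filter (fun p => p.1 = f)).card ≤ 2 := by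
      intro f _
      induction f using Sym2.ind with
      | _ x y =>
        have hsub : B.filter (fun p => p.1 = s(x, y)) ⊆
            ({(s(x, y), x), (s(x, y), y)} : Finset (Sym2 V × V)) := by
          intro p hp
          rw [Finset.mem_filter, hBdef, Finset.mem_filter] at hp
          obtain ⟨⟨_, hv⟩, hpf⟩ := hp
          rw [Finset.mem_insert, Finset.mem_singleton]
          rw [hpf] at hv
          rw [Sym2.mem_iff] at hv
          rcases hv with rfl | rfl
          · left; rw [← hpf]
          · right; rw [← hpf]
        calc (B.filter (fun p => p.1 = s(x, y))).card
            ≤ ({(s(x, y), x), (s(x, y), y)} : Finset (Sym2 V × V)).card :=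
              Finset.card_le_card hsub
          _ ≤ 2 := Finset.card_insert_le _ _ |>.trans (by simp)
    calc ∑ f ∈ Mstar \ M', (B.filter (fun p => p.1 = f)).card
        ≤ ∑ _f ∈ Mstar \ M', 2 := Finset.sum_le_sum this
      _ = 2 * (Mstar \ M').card := by rw [Finset.sum_const, smul_eq_mul, mul_comm]
  have key : (M' \ Mstar).card ≤ (Mstar \ M').card := by
    have := hAcard.trans (hAB.trans hBcard)
    omega
  have h1 : (M' \ Mstar).card + (M' ∩ Mstar).card = M'.card :=
    Finset.card_sdiff_add_card_inter M' Mstar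
  have h2 : (Mstar \ M').card + (Mstar ∩ M').card = Mstar.card :=
    Finset.card_sdiff_add_card_inter Mstar M'
  rw [Finset.inter_comm] at h2
  omega
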